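/- Let X be a Lorentzian pre-length space with continuous τ satisfying τ(x,x) = 0 for all x, and α, β : (-π/2, π/2) → X two τ-arclength parametrized timelike lines of length π (AdS-lines). Define, where applicable, c_{αβ}(s,t) = arcosh((cos(τ(α(s),β(t))) − sin(s)sin(t)) / (cos(s)cos(t))) for α(s) ≤ β(t), and analogously c_{βα}, and c^N_{α+}(s) = arcosh((1 − sin(s)sin(t*)) / (cos(s)cos(t*))) where t* = inf{t : α(s) ≤ β(t)}, analogously c^N_{β+}. If all four functions are constant with common value c wherever defined and the infima are attained, then the map sending α(s) ↦ (s,0) and β(t) ↦ (t,c) into AdS' = (-π/2,π/2) ×_cos ℝ is τ-preserving and ≤-preserving; conversely, if α and β admit such a parallel realization at distance c, all four functions are constant equal to c. -/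

import Mathlib

noncomputable section
open Real Set
open scoped Classical

/-- A Lorentzian pre-length space: a set with a metric, a chronological relation `≪`,
a causal relation `≤`, and a lower semicontinuous time separation function `τ`
satisfying `τ(x,y) > 0 ↔ x ≪ y` and the reverse triangle inequality. -/
structure LorentzianPreLengthSpace (X : Type*) [MetricSpace X] where
  chron : X → X → Prop
  causal : X → X → Prop
  tau : X → X → ℝ
  causal_refl : ∀ x, causal x x
  causal_trans : ∀ {x y z}, causal x y → causal y z → causal x z
  chron_trans : ∀ {x y z}, chron x y → chron y z → chron x z
  chron_causal : ∀ {x y}, chron x y → causal x y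
  tau_nonneg : ∀ x y, 0 ≤ tau x y
  tau_pos_iff : ∀ x y, 0 < tau x y ↔ chron x y
  tau_lsc : LowerSemicontinuous fun p : X × X => tau p.1 p.2
  rev_triangle : ∀ {x y z}, causal x y → causal y z → tau x y + tau y z ≤ tau x z

/-- The inverse hyperbolic cosine. -/
def arcosh (x : ℝ) : ℝ := Real.log (x + Real.sqrt (x ^ 2 - 1))

/-- The causal relation of `AdS' = (-π/2,π/2) ×_cos ℝ`. -/
def adsLe (p q : ℝ × ℝ) : Prop :=
  p.1 ≤ q.1 ∧
    Real.sin p.1 * Real.sin q.1 + Real.cos p.1 * Real.cos q.1 * Real.cosh (q.2 - p.2) ≤ 1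

/-- The time separation of `AdS' = (-π/2,π/2) ×_cos ℝ`. -/
def adsTau (p q : ℝ × ℝ) : ℝ :=
  if adsLe p q then
    Real.arccos (Real.sin p.1 * Real.sin q.1 +
      Real.cos p.1 * Real.cos q.1 * Real.cosh (q.2 - p.2))
  else 0

/-- The parameter interval `(-π/2, π/2)` of AdS-lines. -/
def adsI : Set ℝ := Set.Ioo (-(π / 2)) (π / 2)

variable {X : Type*} [MetricSpace X]

/-- An AdS-line: an (inextendible) timelike distance realizer of `τ`-length `π`,
parametrized in `τ`-arclength on `(-π/2, π/2)`. -/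
def IsAdSLine (L : LorentzianPreLengthSpace X) (γ : ℝ → X) : Prop :=
  ∀ s ∈ adsI, ∀ t ∈ adsI, s ≤ t → L.tau (γ s) (γ t) = t - s

/-- A parallel realization of two AdS-lines `α, β` at spacelike distance `c`: the map
sending `α(s) ↦ (s,0)` and `β(t) ↦ (t,c)` into `AdS' = (-π/2,π/2) ×_cos ℝ` is
`τ`-preserving and `≤`-preserving on the union of the two lines. -/
def ParallelRealization (L : LorentzianPreLengthSpace X) (α β : ℝ → X) (c : ℝ) : Prop :=
  ∀ s ∈ adsI, ∀ t ∈ adsI,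
    ((L.causal (α s) (α t) ↔ adsLe (s, 0) (t, 0)) ∧
      (L.causal (β s) (β t) ↔ adsLe (s, c) (t, c)) ∧
      (L.causal (α s) (β t) ↔ adsLe (s, 0) (t, c)) ∧
      (L.causal (β s) (α t) ↔ adsLe (s, c) (t, 0))) ∧
    (L.tau (α s) (α t) = adsTau (s, 0) (t, 0) ∧
      L.tau (β s) (β t) = adsTau (s, c) (t, c) ∧
      L.tau (α s) (β t) = adsTau (s, 0) (t, c) ∧
      L.tau (β s) (α t) = adsTau (s, c) (t, 0))

/-- Two AdS-lines are AdS-parallel if they admit a parallel realization at some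
distance `c ≥ 0`. -/
def AdSParallel (L : LorentzianPreLengthSpace X) (α β : ℝ → X) : Prop :=
  ∃ c, 0 ≤ c ∧ ParallelRealization L α β c

/-- The `c`-criterion for parallel AdS-lines: the functions `c_{αβ}`, `c_{βα}`,
`c^N_{α+}`, `c^N_{β+}` are constant with common value `c` wherever defined, and the
infima appearing in the null functions are attained (are minima). -/
def CCriterion (L : LorentzianPreLengthSpace X) (α β : ℝ → X) (c : ℝ) : Prop :=
  (∀ s ∈ adsI, ∀ t ∈ adsI, L.causal (α s) (β t) →
    _root_.arcosh ((Real.cos (L.tau (α s) (β t)) - Real.sin s * Real.sin t) /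
      (Real.cos s * Real.cos t)) = c) ∧
  (∀ s ∈ adsI, ∀ t ∈ adsI, L.causal (β t) (α s) →
    _root_.arcosh ((Real.cos (L.tau (β t) (α s)) - Real.sin s * Real.sin t) /
      (Real.cos s * Real.cos t)) = c) ∧
  (∀ s ∈ adsI, ∃ tm, IsLeast {t | t ∈ adsI ∧ L.causal (α s) (β t)} tm ∧
    _root_.arcosh ((1 - Real.sin s * Real.sin tm) / (Real.cos s * Real.cos tm)) = c) ∧
  (∀ s ∈ adsI, ∃ tm, IsLeast {t | t ∈ adsI ∧ L.causal (β s) (α t)} tm ∧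
    _root_.arcosh ((1 - Real.sin s * Real.sin tm) / (Real.cos s * Real.cos tm)) = c)

open Filter Topology

namespace CCritAux

lemma lo {s : ℝ} (hs : s ∈ adsI) : -(π/2) < s := hs.1
lemma hi {s : ℝ} (hs : s ∈ adsI) : s < π/2 := hs.2

lemma cos_pos {s : ℝ} (hs : s ∈ adsI) : 0 < Real.cos s :=
  Real.cos_pos_of_mem_Ioo hs

lemma sin_sq_lt_one {s : ℝ} (hs : s ∈ adsI) : Real.sin s ^ 2 < 1 := by
  nlinarith [Real.sin_sq_add_cos_sq s, cos_pos hs]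

lemma sin_mul_lt_one {s t : ℝ} (hs : s ∈ adsI) (ht : t ∈ adsI) :
    Real.sin s * Real.sin t < 1 := by
  nlinarith [sin_sq_lt_one hs, sin_sq_lt_one ht, sq_nonneg (Real.sin s - Real.sin t)]

lemma neg_one_lt_cos {x : ℝ} (h1 : -π < x) (h2 : x < π) : -1 < Real.cos x := by
  have hc : 0 < Real.cos (x / 2) :=
    Real.cos_pos_of_mem_Ioo ⟨by linarith, by linarith⟩
  have h := Real.cos_sq (x / 2)
  rw [show 2 * (x / 2) = x by ring] at h
  nlinarith

lemma neg_one_lt_F {s t : ℝ} (hs : s ∈ adsI) (ht : t ∈ adsI) (c : ℝ) :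
    -1 < Real.sin s * Real.sin t + Real.cos s * Real.cos t * Real.cosh c := by
  have h1 : -1 < Real.cos (s - t) :=
    neg_one_lt_cos (by linarith [lo hs, hi ht]) (by linarith [hi hs, lo ht])
  have h2 := Real.cos_sub s t
  have h3 := Real.one_le_cosh c
  have h4 := mul_pos (cos_pos hs) (cos_pos ht)
  nlinarith

lemma arcosh_cosh {c : ℝ} (hc : 0 ≤ c) : _root_.arcosh (Real.cosh c) = c := by
  have h1 : Real.cosh c ^ 2 - 1 = Real.sinh c ^ 2 := by
    have := Real.cosh_sq c; linarith
  rw [_root_.arcosh, h1, Real.sqrt_sq (Real.sinh_nonneg_iff.mpr hc), Real.cosh_add_sinh,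
    Real.log_exp]

lemma eq_cosh_of_arcosh_eq {y c : ℝ} (hc : 0 ≤ c) (hy : 0 < y ∨ 0 < c)
    (h : _root_.arcosh y = c) : y = Real.cosh c := by
  rcases le_or_gt 1 y with h1 | h1
  · have hnn : (0:ℝ) ≤ y ^ 2 - 1 := by nlinarith
    have hsq : Real.sqrt (y ^ 2 - 1) ^ 2 = y ^ 2 - 1 := Real.sq_sqrt hnn
    have hs0 : 0 ≤ Real.sqrt (y ^ 2 - 1) := Real.sqrt_nonneg _
    have hw : 0 < y + Real.sqrt (y ^ 2 - 1) := by nlinarith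
    have hexp : y + Real.sqrt (y ^ 2 - 1) = Real.exp c := by
      rw [← h, _root_.arcosh, Real.exp_log hw]
    have hkey : Real.exp (-c) * Real.exp c = 1 := by
      rw [← Real.exp_add]; simp
    have hexp' : y - Real.sqrt (y ^ 2 - 1) = Real.exp (-c) := by
      apply mul_right_cancel₀ (Real.exp_ne_zero c)
      rw [hkey, ← hexp]; nlinarith
    rw [Real.cosh_eq]; linarith
  · exfalso
    rcases hy with hy | hcpos
    · rcases le_or_gt 1 y with h2 | h2
      · linarith
      · have hneg : y ^ 2 - 1 < 0 := by nlinarith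
        have : Real.sqrt (y ^ 2 - 1) = 0 := Real.sqrt_eq_zero_of_nonpos hneg.le
        rw [_root_.arcosh, this, add_zero] at h
        have := Real.log_neg hy h2
        linarith
    · -- y < 1, 0 < c; show _root_.arcosh y ≤ 0
      have harc : _root_.arcosh y ≤ 0 := by
        rcases le_or_gt y (-1) with h2 | h2
        · rcases eq_or_lt_of_le h2 with heq | h2'
          · rw [_root_.arcosh, heq]
            norm_num
          · have hnn : (0:ℝ) ≤ y ^ 2 - 1 := by nlinarith
            have hsq : Real.sqrt (y ^ 2 - 1) ^ 2 = y ^ 2 - 1 := Real.sq_sqrt hnn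
            have hs0 : 0 ≤ Real.sqrt (y ^ 2 - 1) := Real.sqrt_nonneg _
            have hlt : Real.sqrt (y ^ 2 - 1) < -y := by nlinarith
            have hwneg : y + Real.sqrt (y ^ 2 - 1) < 0 := by linarith
            rw [_root_.arcosh, ← Real.log_abs, abs_of_neg hwneg]
            apply Real.log_nonpos (by linarith)
            nlinarith
        · have hneg : y ^ 2 - 1 < 0 := by nlinarith
          have h0 : Real.sqrt (y ^ 2 - 1) = 0 := Real.sqrt_eq_zero_of_nonpos hneg.le
          rw [_root_.arcosh, h0, add_zero, ← Real.log_abs]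
          apply Real.log_nonpos (abs_nonneg y)
          rw [abs_le]; constructor <;> linarith
      linarith

lemma quasiconcave {A B x y z : ℝ} (hB : 0 < B)
    (hx : -(π/2) < x) (hxy : x < y) (hyz : y < z) (hz : z < π/2)
    (h1 : A * Real.sin y + B * Real.cos y ≤ A * Real.sin x + B * Real.cos x)
    (h2 : A * Real.sin y + B * Real.cos y ≤ A * Real.sin z + B * Real.cos z) :
    False := by
  set u := (x + y)/2 with hu
  set v := (y + z)/2 with hv
  have hxpi : -π < x := by linarith [Real.pi_pos]
  have hzpi : z < π := by linarith [Real.pi_pos]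
  have e1 : A * Real.sin x + B * Real.cos x - (A * Real.sin y + B * Real.cos y)
      = 2 * Real.sin ((x - y)/2) * (A * Real.cos u - B * Real.sin u) := by
    have hs := Real.sin_sub_sin x y
    have hcc := Real.cos_sub_cos x y
    rw [hu]
    linear_combination A * hs + B * hcc
  have e2 : A * Real.sin z + B * Real.cos z - (A * Real.sin y + B * Real.cos y)
      = 2 * Real.sin ((z - y)/2) * (A * Real.cos v - B * Real.sin v) := by
    have hs := Real.sin_sub_sin z y
    have hcc := Real.cos_sub_cos z y
    rw [show (z + y)/2 = (y + z)/2 by ring] at hs hcc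
    rw [hv]
    linear_combination A * hs + B * hcc
  have hsin1 : Real.sin ((x - y)/2) < 0 :=
    Real.sin_neg_of_neg_of_neg_pi_lt (by linarith) (by linarith)
  have hsin2 : 0 < Real.sin ((z - y)/2) :=
    Real.sin_pos_of_pos_of_lt_pi (by linarith) (by linarith [Real.pi_pos])
  have hG1 : A * Real.cos u - B * Real.sin u ≤ 0 := by nlinarith
  have hG2 : 0 ≤ A * Real.cos v - B * Real.sin v := by nlinarith
  have hcu : 0 < Real.cos u := Real.cos_pos_of_mem_Ioo ⟨by rw [hu]; linarith, by rw [hu]; linarith⟩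
  have hcv : 0 < Real.cos v := Real.cos_pos_of_mem_Ioo ⟨by rw [hv]; linarith, by rw [hv]; linarith⟩
  have huv : u < v := by rw [hu, hv]; linarith
  have hsuv : Real.sin (u - v) < 0 :=
    Real.sin_neg_of_neg_of_neg_pi_lt (by linarith)
      (by rw [hu, hv]; linarith)
  have hexpand := Real.sin_sub u v
  nlinarith [mul_le_mul_of_nonneg_right hG1 hcv.le, mul_le_mul_of_nonneg_right hG2 hcu.le]

end CCritAux

namespace CCritAux

lemma adsLe_def (s a t b : ℝ) : adsLe (s, a) (t, b) ↔
    (s ≤ t ∧ Real.sin s * Real.sin t + Real.cos s * Real.cos t * Real.cosh (b - a) ≤ 1) :=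
  Iff.rfl

lemma adsTau_def (s a t b : ℝ) : adsTau (s, a) (t, b) =
    if (s ≤ t ∧ Real.sin s * Real.sin t + Real.cos s * Real.cos t * Real.cosh (b - a) ≤ 1) then
      Real.arccos (Real.sin s * Real.sin t + Real.cos s * Real.cos t * Real.cosh (b - a))
    else 0 := by
  unfold adsTau
  exact if_congr (adsLe_def s a t b) rfl rfl

lemma adsLe_congr {s t a b a' b' : ℝ} (h : Real.cosh (b - a) = Real.cosh (b' - a')) :
    adsLe (s, a) (t, b) ↔ adsLe (s, a') (t, b') := by
  rw [adsLe_def, adsLe_def, h]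

lemma adsTau_congr {s t a b a' b' : ℝ} (h : Real.cosh (b - a) = Real.cosh (b' - a')) :
    adsTau (s, a) (t, b) = adsTau (s, a') (t, b') := by
  rw [adsTau_def, adsTau_def, h]

variable {X : Type*} [MetricSpace X] {L : LorentzianPreLengthSpace X}

lemma tau_zero_of_not_causal {x y : X} (h : ¬ L.causal x y) : L.tau x y = 0 := by
  by_contra h'
  exact h (L.chron_causal ((L.tau_pos_iff x y).mp
    (lt_of_le_of_ne (L.tau_nonneg x y) (Ne.symm h'))))

lemma line_le {γ : ℝ → X} (hγ : IsAdSLine L γ) (hdiag : ∀ x, L.tau x x = 0)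
    {s t : ℝ} (hs : s ∈ adsI) (ht : t ∈ adsI) (h : L.causal (γ s) (γ t)) : s ≤ t := by
  by_contra h'
  push_neg at h'
  have h2 : L.tau (γ t) (γ s) = s - t := hγ t ht s hs h'.le
  have h3 : L.causal (γ t) (γ s) :=
    L.chron_causal ((L.tau_pos_iff _ _).mp (by rw [h2]; linarith))
  have h4 := L.rev_triangle h h3
  rw [hdiag, h2] at h4
  linarith [L.tau_nonneg (γ s) (γ t)]

lemma line_causal {γ : ℝ → X} (hγ : IsAdSLine L γ)
    {s t : ℝ} (hs : s ∈ adsI) (ht : t ∈ adsI) (h : s ≤ t) : L.causal (γ s) (γ t) := by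
  rcases eq_or_lt_of_le h with rfl | h'
  · exact L.causal_refl _
  · exact L.chron_causal ((L.tau_pos_iff _ _).mp (by rw [hγ s hs t ht h]; linarith))

lemma self_main (L : LorentzianPreLengthSpace X) (hdiag : ∀ x, L.tau x x = 0)
    {γ : ℝ → X} (hγ : IsAdSLine L γ) (a : ℝ) :
    ∀ s ∈ adsI, ∀ t ∈ adsI,
      (L.causal (γ s) (γ t) ↔ adsLe (s, a) (t, a)) ∧
        L.tau (γ s) (γ t) = adsTau (s, a) (t, a) := by
  intro s hs t ht
  have hEeq : Real.sin s * Real.sin t + Real.cos s * Real.cos t * Real.cosh (a - a)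
      = Real.cos (t - s) := by
    rw [sub_self, Real.cosh_zero, mul_one, Real.cos_sub]; ring
  have hle : adsLe (s, a) (t, a) ↔ s ≤ t := by
    rw [adsLe_def]
    constructor
    · exact fun h => h.1
    · intro h
      exact ⟨h, by rw [hEeq]; exact Real.cos_le_one _⟩
  constructor
  · rw [hle]
    exact ⟨line_le hγ hdiag hs ht, line_causal hγ hs ht⟩
  · rcases le_or_gt s t with h | h
    · rw [adsTau_def, if_pos ⟨h, by rw [hEeq]; exact Real.cos_le_one _⟩, hEeq,
        Real.arccos_cos (by linarith) (by linarith [hi ht, lo hs]), hγ s hs t ht h]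
    · rw [tau_zero_of_not_causal
        (fun hcau => absurd (line_le hγ hdiag hs ht hcau) (not_le.mpr h)),
        adsTau_def, if_neg (fun hh => absurd hh.1 (not_le.mpr h))]

lemma cross_main (L : LorentzianPreLengthSpace X) (hdiag : ∀ x, L.tau x x = 0)
    {γ δ : ℝ → X} (hγ : IsAdSLine L γ) (hδ : IsAdSLine L δ) {c : ℝ} (hc : 0 ≤ c)
    (H1 : ∀ s ∈ adsI, ∀ t ∈ adsI, L.causal (γ s) (δ t) →
      _root_.arcosh ((Real.cos (L.tau (γ s) (δ t)) - Real.sin s * Real.sin t) /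
        (Real.cos s * Real.cos t)) = c)
    (H3 : ∀ s ∈ adsI, ∃ tm, IsLeast {t | t ∈ adsI ∧ L.causal (γ s) (δ t)} tm ∧
      _root_.arcosh ((1 - Real.sin s * Real.sin tm) / (Real.cos s * Real.cos tm)) = c)
    (H4 : ∀ s ∈ adsI, ∃ tm, IsLeast {t | t ∈ adsI ∧ L.causal (δ s) (γ t)} tm ∧
      _root_.arcosh ((1 - Real.sin s * Real.sin tm) / (Real.cos s * Real.cos tm)) = c) :
    ∀ s ∈ adsI, ∀ t ∈ adsI,
      (L.causal (γ s) (δ t) ↔ adsLe (s, 0) (t, c)) ∧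
        L.tau (γ s) (δ t) = adsTau (s, 0) (t, c) := by
  intro s hs t ht
  set F : ℝ → ℝ := fun u => Real.sin s * Real.sin u + Real.cos s * Real.cos u * Real.cosh c
    with hFdef
  have hcs : 0 < Real.cos s := cos_pos hs
  obtain ⟨tm, ⟨⟨htmI, htmc⟩, htmlb⟩, htmeq⟩ := H3 s hs
  have hctm : 0 < Real.cos tm := cos_pos htmI
  -- Key1 : F tm = 1
  have hF1 : F tm = 1 := by
    have hy : 0 < (1 - Real.sin s * Real.sin tm) / (Real.cos s * Real.cos tm) :=
      div_pos (by linarith [sin_mul_lt_one hs htmI]) (mul_pos hcs hctm)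
    have h2 := eq_cosh_of_arcosh_eq hc (Or.inl hy) htmeq
    rw [div_eq_iff (mul_pos hcs hctm).ne'] at h2
    simp only [hFdef]
    linear_combination -h2
  -- Key2 : causal beyond tm
  have key2 : ∀ u ∈ adsI, tm ≤ u → L.causal (γ s) (δ u) := by
    intro u hu h
    rcases eq_or_lt_of_le h with rfl | h'
    · exact htmc
    · exact L.causal_trans htmc (line_causal hδ htmI hu h'.le)
  -- Key3 : causal → τ = arccos (F u) and F u ≤ 1
  have key3 : ∀ u ∈ adsI, L.causal (γ s) (δ u) →
      L.tau (γ s) (δ u) = Real.arccos (F u) ∧ F u ≤ 1 := by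
    intro u hu hcaus
    have hcu : 0 < Real.cos u := cos_pos hu
    have hutm : tm ≤ u := htmlb ⟨hu, hcaus⟩
    obtain ⟨um, ⟨⟨humI, humc⟩, _⟩, humeq⟩ := H4 u hu
    have hsum : L.causal (γ s) (γ um) := L.causal_trans hcaus humc
    have hsle : s ≤ um := line_le hγ hdiag hs humI hsum
    have htub : L.tau (γ s) (δ u) ≤ um - s := by
      have h1 := L.rev_triangle hcaus humc
      rw [hγ s hs um humI hsle] at h1
      linarith [L.tau_nonneg (δ u) (γ um)]
    have hgpi : L.tau (γ s) (δ u) < π := by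
      have : um - s < π := by linarith [hi humI, lo hs]
      linarith
    rcases eq_or_lt_of_le hc with rfl | hcpos
    · -- c = 0
      have htms : tm = s := by
        have h1 : Real.cos (s - tm) = 1 := by
          simp only [hFdef, Real.cosh_zero, mul_one] at hF1
          rw [Real.cos_sub]; linarith
        have h2 := (Real.cos_eq_one_iff_of_lt_of_lt
          (by linarith [lo hs, hi htmI, Real.pi_pos])
          (by linarith [hi hs, lo htmI, Real.pi_pos])).mp h1
        linarith
      have hsu : s ≤ u := htms ▸ hutm
      have hum_eq : um = u := by
        have hy : 0 < (1 - Real.sin u * Real.sin um) / (Real.cos u * Real.cos um) :=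
          div_pos (by linarith [sin_mul_lt_one hu humI]) (mul_pos hcu (cos_pos humI))
        have h2 := eq_cosh_of_arcosh_eq le_rfl (Or.inl hy) humeq
        rw [Real.cosh_zero, div_eq_iff (mul_pos hcu (cos_pos humI)).ne'] at h2
        have h3 : Real.cos (u - um) = 1 := by rw [Real.cos_sub]; linarith
        have h4 := (Real.cos_eq_one_iff_of_lt_of_lt
          (by linarith [lo hu, hi humI, Real.pi_pos])
          (by linarith [hi hu, lo humI, Real.pi_pos])).mp h3
        linarith
      have hlow : u - s ≤ L.tau (γ s) (δ u) := by
        rcases eq_or_lt_of_le hsu with heq | h'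
        · rw [← heq]
          linarith [L.tau_nonneg (γ s) (δ s)]
        · have h2 := L.rev_triangle htmc (line_causal hδ htmI hu hutm)
          rw [hδ tm htmI u hu hutm] at h2
          have h3 := L.tau_nonneg (γ s) (δ tm)
          rw [htms] at h2 h3
          linarith
      have htalt : L.tau (γ s) (δ u) = u - s := le_antisymm (hum_eq ▸ htub) hlow
      have hFu : F u = Real.cos (u - s) := by
        simp only [hFdef, Real.cosh_zero, mul_one]
        rw [Real.cos_sub]; ring
      refine ⟨?_, by rw [hFu]; exact Real.cos_le_one _⟩
      rw [htalt, hFu, Real.arccos_cos (by linarith) (by linarith [hi hu, lo hs])]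
    · -- c > 0
      by_cases hch : L.chron (γ s) (δ u)
      · have harc := H1 s hs u hu hcaus
        have hx := eq_cosh_of_arcosh_eq hc (Or.inr hcpos) harc
        rw [div_eq_iff (mul_pos hcs hcu).ne'] at hx
        have hcosg : Real.cos (L.tau (γ s) (δ u)) = F u := by
          simp only [hFdef]
          linear_combination hx
        refine ⟨?_, by rw [← hcosg]; exact Real.cos_le_one _⟩
        rw [← hcosg, Real.arccos_cos (L.tau_nonneg _ _) hgpi.le]
      · have hg : L.tau (γ s) (δ u) = 0 := by
          by_contra h'
          exact hch ((L.tau_pos_iff _ _).mp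
            (lt_of_le_of_ne (L.tau_nonneg _ _) (Ne.symm h')))
        have hueq : u = tm := by
          by_contra hne
          have h' : tm < u := lt_of_le_of_ne hutm (Ne.symm hne)
          have h2 := L.rev_triangle htmc (line_causal hδ htmI hu h'.le)
          rw [hδ tm htmI u hu h'.le] at h2
          have : 0 < L.tau (γ s) (δ u) := by linarith [L.tau_nonneg (γ s) (δ tm)]
          exact hch ((L.tau_pos_iff _ _).mp this)
        subst hueq
        exact ⟨by rw [hg, hF1, Real.arccos_one], le_of_eq hF1⟩
  -- Key4 : s ≤ tm
  have key4 : s ≤ tm := by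
    have hFc : Continuous F := by
      simp only [hFdef]; fun_prop
    have hlim1 : Filter.Tendsto (fun u => Real.arccos (F u)) (𝓝[<] (π/2))
        (𝓝 (Real.arccos (Real.sin s))) := by
      have h0 : Filter.Tendsto F (𝓝 (π/2)) (𝓝 (Real.sin s)) := by
        have := hFc.tendsto (π/2)
        simpa [hFdef, Real.sin_pi_div_two, Real.cos_pi_div_two] using this
      exact ((Real.continuous_arccos.tendsto _).comp h0).mono_left nhdsWithin_le_nhds
    have hlim2 : Filter.Tendsto (fun u => u - tm) (𝓝[<] (π/2)) (𝓝 (π/2 - tm)) :=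
      ((continuous_id.sub continuous_const).tendsto _).mono_left nhdsWithin_le_nhds
    have hev : ∀ᶠ u in 𝓝[<] (π/2), u - tm ≤ Real.arccos (F u) := by
      filter_upwards [Ioo_mem_nhdsLT_of_mem
        (show (π/2 : ℝ) ∈ Set.Ioc tm (π/2) from ⟨hi htmI, le_refl _⟩)] with u hu
      have huI : u ∈ adsI := ⟨by linarith [lo htmI, hu.1], hu.2⟩
      have hcaus := key2 u huI hu.1.le
      have h2 := L.rev_triangle htmc (line_causal hδ htmI huI hu.1.le)
      rw [hδ tm htmI u huI hu.1.le, (key3 u huI hcaus).1] at h2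
      linarith [L.tau_nonneg (γ s) (δ tm)]
    have hle := le_of_tendsto_of_tendsto hlim2 hlim1 hev
    have harcs : Real.arccos (Real.sin s) = π/2 - s := by
      rw [← Real.cos_pi_div_two_sub,
        Real.arccos_cos (by linarith [hi hs]) (by linarith [lo hs, Real.pi_pos])]
    rw [harcs] at hle
    linarith
  -- Key5 : lower-bound characterization
  have key5 : ∀ u ∈ adsI, s ≤ u → F u ≤ 1 → tm ≤ u := by
    intro u hu hsu hFu
    by_contra h
    push_neg at h
    rcases eq_or_lt_of_le hsu with heq | hsu'
    · rw [← heq] at hFu h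
      have hcosh1 : Real.cosh c ≤ 1 := by
        simp only [hFdef] at hFu
        nlinarith [Real.sin_sq_add_cos_sq s, pow_pos hcs 2]
      have hcosh1' : Real.cosh c = 1 := le_antisymm hcosh1 (Real.one_le_cosh c)
      simp only [hFdef, hcosh1', mul_one] at hF1
      have h1 : Real.cos (s - tm) = 1 := by
        rw [Real.cos_sub]; linarith
      have h2 := (Real.cos_eq_one_iff_of_lt_of_lt
        (by linarith [lo hs, hi htmI, Real.pi_pos])
        (by linarith [hi hs, lo htmI, Real.pi_pos])).mp h1
      linarith
    · have hFs1 : (1:ℝ) ≤ F s := by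
        simp only [hFdef]
        nlinarith [Real.sin_sq_add_cos_sq s, Real.one_le_cosh c, pow_pos hcs 2]
      have hrw : ∀ v, Real.sin s * Real.sin v + (Real.cos s * Real.cosh c) * Real.cos v
          = F v := by
        intro v; simp only [hFdef]; ring
      exact quasiconcave (mul_pos hcs (Real.cosh_pos c)) (lo hs) hsu' h (hi htmI)
        (by rw [hrw, hrw]; linarith) (by rw [hrw, hrw]; linarith [hF1])
  -- assemble
  have hFt : Real.sin s * Real.sin t + Real.cos s * Real.cos t * Real.cosh (c - 0) = F t := by
    rw [sub_zero]
  constructor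
  · constructor
    · intro hcaus
      rw [adsLe_def, hFt]
      exact ⟨le_trans key4 (htmlb ⟨ht, hcaus⟩), (key3 t ht hcaus).2⟩
    · intro hle
      rw [adsLe_def, hFt] at hle
      exact key2 t ht (key5 t ht hle.1 hle.2)
  · by_cases hcaus : L.causal (γ s) (δ t)
    · have h3 := key3 t ht hcaus
      rw [adsTau_def, if_pos ⟨le_trans key4 (htmlb ⟨ht, hcaus⟩), by rw [hFt]; exact h3.2⟩,
        hFt, h3.1]
    · rw [tau_zero_of_not_causal hcaus, adsTau_def, if_neg]
      intro hh
      rw [hFt] at hh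
      exact hcaus (key2 t ht (key5 t ht hh.1 hh.2))

lemma backward_least {P : ℝ → Prop} {c : ℝ} (hc : 0 ≤ c) {s : ℝ} (hs : s ∈ adsI)
    (hP : ∀ t ∈ adsI, (P t ↔ (s ≤ t ∧
      Real.sin s * Real.sin t + Real.cos s * Real.cos t * Real.cosh c ≤ 1))) :
    ∃ tm, IsLeast {t | t ∈ adsI ∧ P t} tm ∧
      _root_.arcosh ((1 - Real.sin s * Real.sin tm) / (Real.cos s * Real.cos tm)) = c := by
  have hcs : 0 < Real.cos s := cos_pos hs
  set F : ℝ → ℝ := fun u => Real.sin s * Real.sin u + Real.cos s * Real.cos u * Real.cosh c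
    with hFdef
  have hFc : Continuous F := by simp only [hFdef]; fun_prop
  set T : Set ℝ := Set.Icc s (π/2) ∩ F ⁻¹' Set.Iic 1 with hT
  have hTclosed : IsClosed T := isClosed_Icc.inter (isClosed_Iic.preimage hFc)
  have hmem : π/2 ∈ T := by
    refine ⟨⟨(hi hs).le, le_refl _⟩, ?_⟩
    simp only [Set.mem_preimage, Set.mem_Iic, hFdef, Real.sin_pi_div_two,
      Real.cos_pi_div_two, mul_one, mul_zero, zero_mul, add_zero]
    exact Real.sin_le_one s
  have hbdd : BddBelow T := ⟨s, fun x hx => hx.1.1⟩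
  have hne : T.Nonempty := ⟨π/2, hmem⟩
  set tm := sInf T with htmdef
  have htmT : tm ∈ T := hTclosed.csInf_mem hne hbdd
  have htms : s ≤ tm := htmT.1.1
  have hFtm_le : F tm ≤ 1 := htmT.2
  have hFtm_ge : (1:ℝ) ≤ F tm := by
    rcases eq_or_lt_of_le htms with heq | hlt
    · rw [← heq]
      simp only [hFdef]
      nlinarith [Real.sin_sq_add_cos_sq s, Real.one_le_cosh c, pow_pos hcs 2]
    · have hev : ∀ᶠ u in 𝓝[<] tm, 1 ≤ F u := by
        filter_upwards [Ioo_mem_nhdsLT_of_mem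
          (show tm ∈ Set.Ioc s tm from ⟨hlt, le_refl _⟩)] with u hu
        by_contra hle
        push_neg at hle
        have hu2 : u ∈ T := ⟨⟨hu.1.le, le_trans hu.2.le htmT.1.2⟩, hle.le⟩
        linarith [csInf_le hbdd hu2, hu.2]
      have hlim : Filter.Tendsto F (𝓝[<] tm) (𝓝 (F tm)) :=
        (hFc.tendsto tm).mono_left nhdsWithin_le_nhds
      exact ge_of_tendsto hlim hev
  have hFtm : F tm = 1 := le_antisymm hFtm_le hFtm_ge
  have htmlt : tm < π/2 := by
    rcases eq_or_lt_of_le htmT.1.2 with heq | h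
    · exfalso
      rw [heq] at hFtm
      simp only [hFdef, Real.sin_pi_div_two, Real.cos_pi_div_two, mul_one, mul_zero,
        zero_mul, add_zero] at hFtm
      nlinarith [sin_sq_lt_one hs]
    · exact h
  have htmI : tm ∈ adsI := ⟨lt_of_lt_of_le (lo hs) htms, htmlt⟩
  have hctm : 0 < Real.cos tm := cos_pos htmI
  refine ⟨tm, ⟨⟨htmI, (hP tm htmI).mpr ⟨htms, hFtm_le⟩⟩, ?_⟩, ?_⟩
  · rintro x ⟨hxI, hPx⟩
    obtain ⟨h1, h2⟩ := (hP x hxI).mp hPx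
    exact csInf_le hbdd ⟨⟨h1, (hi hxI).le⟩, h2⟩
  · have hdiv : (1 - Real.sin s * Real.sin tm) / (Real.cos s * Real.cos tm) = Real.cosh c := by
      rw [div_eq_iff (mul_pos hcs hctm).ne']
      simp only [hFdef] at hFtm
      linear_combination -hFtm
    rw [hdiv, arcosh_cosh hc]

end CCritAux

/-- The `c`-criterion for parallel AdS-lines: two AdS-lines satisfy the `c`-criterion
with value `c` if and only if they admit a parallel realization at distance `c`. -/
theorem c_criterion_iff_parallel
    (L : LorentzianPreLengthSpace X)
    (hcont : Continuous fun p : X × X => L.tau p.1 p.2)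
    (hdiag : ∀ x, L.tau x x = 0)
    (α β : ℝ → X) (hα : IsAdSLine L α) (hβ : IsAdSLine L β)
    (c : ℝ) (hc : 0 ≤ c) :
    CCriterion L α β c ↔ ParallelRealization L α β c := by
  constructor
  · rintro ⟨H1, H2, H3, H4⟩
    have H1' : ∀ s ∈ adsI, ∀ t ∈ adsI, L.causal (β s) (α t) →
        _root_.arcosh ((Real.cos (L.tau (β s) (α t)) - Real.sin s * Real.sin t) /
          (Real.cos s * Real.cos t)) = c := by
      intro s hs t ht h
      have h2 := H2 t ht s hs h
      rw [mul_comm (Real.sin t) (Real.sin s), mul_comm (Real.cos t) (Real.cos s)] at h2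
      exact h2
    have crossAB := CCritAux.cross_main L hdiag hα hβ hc H1 H3 H4
    have crossBA := CCritAux.cross_main L hdiag hβ hα hc H1' H4 H3
    intro s hs t ht
    obtain ⟨hA1, hA2⟩ := CCritAux.self_main L hdiag hα 0 s hs t ht
    obtain ⟨hB1, hB2⟩ := CCritAux.self_main L hdiag hβ c s hs t ht
    obtain ⟨hAB1, hAB2⟩ := crossAB s hs t ht
    obtain ⟨hBA1, hBA2⟩ := crossBA s hs t ht
    have hcongr : Real.cosh (c - 0) = Real.cosh (0 - c) := by
      rw [show (0:ℝ) - c = -(c - 0) by ring, Real.cosh_neg]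
    exact ⟨⟨hA1, hB1, hAB1, hBA1.trans (CCritAux.adsLe_congr hcongr)⟩,
      hA2, hB2, hAB2, hBA2.trans (CCritAux.adsTau_congr hcongr)⟩
  · intro hPR
    refine ⟨?_, ?_, ?_, ?_⟩
    · -- c_{αβ}
      intro s hs t ht hcaus
      have hcs : 0 < Real.cos s := CCritAux.cos_pos hs
      have hct : 0 < Real.cos t := CCritAux.cos_pos ht
      obtain ⟨⟨_, _, hci, _⟩, _, _, hti, _⟩ := hPR s hs t ht
      have hle := hci.mp hcaus
      rw [CCritAux.adsLe_def, sub_zero] at hle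
      have hE1 : -1 ≤ Real.sin s * Real.sin t + Real.cos s * Real.cos t * Real.cosh c :=
        (CCritAux.neg_one_lt_F hs ht c).le
      have htau : L.tau (α s) (β t)
          = Real.arccos (Real.sin s * Real.sin t + Real.cos s * Real.cos t * Real.cosh c) := by
        rw [hti, CCritAux.adsTau_def, sub_zero, if_pos hle]
      rw [htau, Real.cos_arccos hE1 hle.2]
      have hdiv : (Real.sin s * Real.sin t + Real.cos s * Real.cos t * Real.cosh c
          - Real.sin s * Real.sin t) / (Real.cos s * Real.cos t) = Real.cosh c := by
        rw [div_eq_iff (mul_pos hcs hct).ne']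
        ring
      rw [hdiv, CCritAux.arcosh_cosh hc]
    · -- c_{βα}
      intro s hs t ht hcaus
      have hcs : 0 < Real.cos s := CCritAux.cos_pos hs
      have hct : 0 < Real.cos t := CCritAux.cos_pos ht
      obtain ⟨⟨_, _, _, hci⟩, _, _, _, hti⟩ := hPR t ht s hs
      have hle := hci.mp hcaus
      rw [CCritAux.adsLe_def, zero_sub, Real.cosh_neg] at hle
      have hE1 : -1 ≤ Real.sin t * Real.sin s + Real.cos t * Real.cos s * Real.cosh c :=
        (CCritAux.neg_one_lt_F ht hs c).le
      have htau : L.tau (β t) (α s)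
          = Real.arccos (Real.sin t * Real.sin s + Real.cos t * Real.cos s * Real.cosh c) := by
        rw [hti, CCritAux.adsTau_def, zero_sub, Real.cosh_neg, if_pos hle]
      rw [htau, Real.cos_arccos hE1 hle.2]
      have hdiv : (Real.sin t * Real.sin s + Real.cos t * Real.cos s * Real.cosh c
          - Real.sin s * Real.sin t) / (Real.cos s * Real.cos t) = Real.cosh c := by
        rw [div_eq_iff (mul_pos hcs hct).ne']
        ring
      rw [hdiv, CCritAux.arcosh_cosh hc]
    · -- null α→β
      intro s hs
      apply CCritAux.backward_least hc hs (P := fun t => L.causal (α s) (β t))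
      intro t ht
      obtain ⟨⟨_, _, hci, _⟩, _⟩ := hPR s hs t ht
      rw [hci, CCritAux.adsLe_def, sub_zero]
    · -- null β→α
      intro s hs
      apply CCritAux.backward_least hc hs (P := fun t => L.causal (β s) (α t))
      intro t ht
      obtain ⟨⟨_, _, _, hci⟩, _⟩ := hPR s hs t ht
      rw [hci, CCritAux.adsLe_def, zero_sub, Real.cosh_neg]
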